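/- arXiv:1511.05328 — 3 statements merged into one kernel-verified Lean document; each statement's English description precedes it below -/
import Mathlib

section
/- Bounds on the piecewise delays. Let h > 0, r₀, r₁ ≥ 0, η_M ≥ 0, μ_M ≥ 0, and let 0 = s₀ < s₁ < s₂ < … with s_{k+1} − s_k ≤ h, ξ_k = s_k + r₀ + η_k with 0 ≤ η_k ≤ η_M, t_k = ξ_k + r₁ + μ_k with 0 ≤ μ_k ≤ μ_M and t_k ≤ t_{k+1}. Let t ≥ 0 and suppose t ∈ [t_k, t_{k+1}) and t ∈ [t_j − μ_j, t_{j+1} − μ_{j+1}) for some j, k ∈ ℤ₊ (so that τ₂(t) = t − s_k and τ₁(t) = t − s_j). Then r₀ + r₁ ≤ t − s_j ≤ t − s_k ≤ r₀ + r₁ + h + η_M + μ_M; i.e., r₀ + r₁ ≤ τ₁(t) ≤ τ₂(t) ≤ τ_M where τ_M = r₀ + r₁ + h + η_M + μ_M. -/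
/-- **Bounds on the piecewise delays.**  With sampling instants `s k`
(`s 0 = 0`, `s (k+1) - s k ≤ h`), controller updating times `ξ k = s k + r₀ + η k`
(`0 ≤ η k ≤ η_M`), actuator updating times `t k = ξ k + r₁ + μ k` (`0 ≤ μ k ≤ μ_M`,
`t k ≤ t (k+1)`): if `t ≥ 0`, `t ∈ [t k, t (k+1))` and `t ∈ [t j - μ j, t (j+1) - μ (j+1))`
(so that `τ₂ t = t - s k` and `τ₁ t = t - s j`), then
`r₀ + r₁ ≤ t - s j ≤ t - s k ≤ r₀ + r₁ + h + η_M + μ_M`. -/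
theorem piecewise_delay_bounds
    (h r₀ r₁ ηM μM : ℝ) (hh : 0 < h) (hr₀ : 0 ≤ r₀) (hr₁ : 0 ≤ r₁)
    (hηM : 0 ≤ ηM) (hμM : 0 ≤ μM)
    (s η μ : ℕ → ℝ) (hs0 : s 0 = 0) (hsmono : StrictMono s)
    (hstep : ∀ k, s (k + 1) - s k ≤ h)
    (hη : ∀ k, 0 ≤ η k ∧ η k ≤ ηM) (hμ : ∀ k, 0 ≤ μ k ∧ μ k ≤ μM)
    (ξ tt : ℕ → ℝ) (hξ : ∀ k, ξ k = s k + r₀ + η k) (htt : ∀ k, tt k = ξ k + r₁ + μ k)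
    (httmono : ∀ k, tt k ≤ tt (k + 1))
    (t : ℝ) (ht : 0 ≤ t) (j k : ℕ)
    (htk : t ∈ Set.Ico (tt k) (tt (k + 1)))
    (htj : t ∈ Set.Ico (tt j - μ j) (tt (j + 1) - μ (j + 1))) :
    r₀ + r₁ ≤ t - s j ∧ t - s j ≤ t - s k ∧ t - s k ≤ r₀ + r₁ + h + ηM + μM := by
  have httM : Monotone tt := monotone_nat_of_le_succ httmono
  -- first bound
  have h1 : r₀ + r₁ ≤ t - s j := by
    have := htj.1
    have hηj := (hη j).1
    rw [htt j, hξ j] at this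
    linarith
  -- k ≤ j
  have hkj : k ≤ j := by
    by_contra hc
    push_neg at hc
    have : tt (j + 1) ≤ tt k := httM hc
    have h2 := htj.2
    have h3 := htk.1
    have := (hμ (j + 1)).1
    linarith
  have h2 : t - s j ≤ t - s k := by
    have := hsmono.monotone hkj
    linarith
  refine ⟨h1, h2, ?_⟩
  have h3 := htk.2
  rw [htt (k + 1), hξ (k + 1)] at h3
  have := hstep k
  have := (hη (k + 1)).2
  have := (hμ (k + 1)).2
  linarith
end

section
/- Exponential decay transfers from the predictor variable to the state (Appendix B). Let A be a real n×n matrix, B a real n×m matrix, K a real m×n matrix, r₀, r₁ ≥ 0, τ̄ ≥ 0, α > 0, M > 0. Let z : ℝ → ℝⁿ be measurable with z(t) = 0 for t < 0 and |z(t)| ≤ M e^{−αt} |z(0)| for all t ≥ 0, and let τ : ℝ → [0, τ̄] be measurable. Define x(t) = e^{−A(r₀+r₁)}z(t) − ∫_{t−r₁}^{t+r₀} e^{A(t−r₁−θ)}BK z(θ − r₀ − τ(θ − r₀)) dθ for t ≥ 0. Then there exists a constant C > 0, depending only on A, B, K, r₀, r₁, τ̄, α, M, such that |x(t)| ≤ C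 e^{−αt} |z(0)| for all t ≥ 0. -/
open Matrix MeasureTheory

/-- The Euclidean norm on `Fin n → ℝ`. -/
noncomputable def euclNorm (n : ℕ) (v : Fin n → ℝ) : ℝ :=
  ‖(EuclideanSpace.equiv (Fin n) ℝ).symm v‖

namespace DecayAux

noncomputable def matBnd {k l : ℕ} (M : Matrix (Fin k) (Fin l) ℝ) : ℝ :=
  ∑ i, ∑ j, |M i j|

lemma matBnd_nonneg {k l : ℕ} (M : Matrix (Fin k) (Fin l) ℝ) : 0 ≤ matBnd M :=
  Finset.sum_nonneg fun _ _ => Finset.sum_nonneg fun _ _ => abs_nonneg _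

lemma euclNorm_eq_sqrt (n : ℕ) (v : Fin n → ℝ) :
    euclNorm n v = Real.sqrt (∑ i, v i ^ 2) := by
  simp [euclNorm, EuclideanSpace.norm_eq, Real.norm_eq_abs, sq_abs]

lemma euclNorm_nonneg (n : ℕ) (v : Fin n → ℝ) : 0 ≤ euclNorm n v := norm_nonneg _

lemma euclNorm_zero (n : ℕ) : euclNorm n 0 = 0 := by
  simp [euclNorm]

lemma euclNorm_sub_le (n : ℕ) (a b : Fin n → ℝ) :
    euclNorm n (a - b) ≤ euclNorm n a + euclNorm n b := by
  simpa [euclNorm] using norm_sub_le ((EuclideanSpace.equiv (Fin n) ℝ).symm a)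
    ((EuclideanSpace.equiv (Fin n) ℝ).symm b)

lemma abs_le_euclNorm (n : ℕ) (v : Fin n → ℝ) (i : Fin n) : |v i| ≤ euclNorm n v := by
  rw [euclNorm_eq_sqrt, ← Real.sqrt_sq_eq_abs]
  exact Real.sqrt_le_sqrt (Finset.single_le_sum (fun j _ => sq_nonneg (v j))
    (Finset.mem_univ i))

lemma euclNorm_le_sum (n : ℕ) (v : Fin n → ℝ) : euclNorm n v ≤ ∑ i, |v i| := by
  rw [euclNorm_eq_sqrt]
  have h1 : ∑ i, v i ^ 2 ≤ (∑ i, |v i|) ^ 2 := by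
    calc ∑ i, v i ^ 2 = ∑ i, |v i| ^ 2 := by simp [sq_abs]
      _ ≤ (∑ i, |v i|) ^ 2 :=
        Finset.sum_sq_le_sq_sum_of_nonneg fun i _ => abs_nonneg _
  calc Real.sqrt (∑ i, v i ^ 2) ≤ Real.sqrt ((∑ i, |v i|) ^ 2) := Real.sqrt_le_sqrt h1
    _ = ∑ i, |v i| := Real.sqrt_sq (Finset.sum_nonneg fun i _ => abs_nonneg _)

lemma euclNorm_mulVec_le {k l : ℕ} (M : Matrix (Fin k) (Fin l) ℝ) (v : Fin l → ℝ) :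
    euclNorm k (M.mulVec v) ≤ matBnd M * euclNorm l v := by
  calc euclNorm k (M.mulVec v) ≤ ∑ i, |M.mulVec v i| := euclNorm_le_sum k _
    _ ≤ ∑ i, ∑ j, |M i j| * euclNorm l v := by
        refine Finset.sum_le_sum fun i _ => ?_
        calc |M.mulVec v i| = |∑ j, M i j * v j| := by
              simp [Matrix.mulVec, dotProduct]
          _ ≤ ∑ j, |M i j * v j| := Finset.abs_sum_le_sum_abs _ _
          _ ≤ ∑ j, |M i j| * euclNorm l v := by
              refine Finset.sum_le_sum fun j _ => ?_
              rw [abs_mul]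
              exact mul_le_mul_of_nonneg_left (abs_le_euclNorm l v j) (abs_nonneg _)
    _ = matBnd M * euclNorm l v := by
        rw [matBnd, Finset.sum_mul]
        exact Finset.sum_congr rfl fun i _ => (Finset.sum_mul _ _ _).symm

lemma pi_norm_le_euclNorm (n : ℕ) (v : Fin n → ℝ) : ‖v‖ ≤ euclNorm n v := by
  refine (pi_norm_le_iff_of_nonneg (euclNorm_nonneg n v)).2 fun i => ?_
  simpa [Real.norm_eq_abs] using abs_le_euclNorm n v i

lemma euclNorm_le_sqrt_mul (n : ℕ) (v : Fin n → ℝ) :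
    euclNorm n v ≤ Real.sqrt n * ‖v‖ := by
  rw [euclNorm_eq_sqrt]
  have h1 : ∑ i, v i ^ 2 ≤ (n : ℝ) * ‖v‖ ^ 2 := by
    calc ∑ i, v i ^ 2 ≤ ∑ _i : Fin n, ‖v‖ ^ 2 := by
          refine Finset.sum_le_sum fun i _ => ?_
          rw [← sq_abs]
          exact pow_le_pow_left₀ (abs_nonneg _) (norm_le_pi_norm v i) 2
      _ = (n : ℝ) * ‖v‖ ^ 2 := by simp [mul_comm]
  calc Real.sqrt (∑ i, v i ^ 2) ≤ Real.sqrt ((n : ℝ) * ‖v‖ ^ 2) := Real.sqrt_le_sqrt h1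
    _ = Real.sqrt n * ‖v‖ := by
        rw [Real.sqrt_mul (Nat.cast_nonneg n), Real.sqrt_sq (norm_nonneg v)]

lemma exists_expBnd (n m : ℕ) (A : Matrix (Fin n) (Fin n) ℝ) (B : Matrix (Fin n) (Fin m) ℝ)
    (K : Matrix (Fin m) (Fin n) ℝ) (a b : ℝ) (hab : a ≤ b) :
    ∃ c, 0 ≤ c ∧ ∀ s ∈ Set.Icc a b,
      matBnd (NormedSpace.exp (s • A) * B * K) ≤ c := by
  letI : NormedAddCommGroup (Matrix (Fin n) (Fin n) ℝ) := Matrix.linftyOpNormedAddCommGroup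
  letI : NormedRing (Matrix (Fin n) (Fin n) ℝ) := Matrix.linftyOpNormedRing
  letI : NormedAlgebra ℝ (Matrix (Fin n) (Fin n) ℝ) := Matrix.linftyOpNormedAlgebra
  letI : NormedAlgebra ℚ (Matrix (Fin n) (Fin n) ℝ) :=
    NormedAlgebra.restrictScalars ℚ ℝ (Matrix (Fin n) (Fin n) ℝ)
  have hexp : Continuous fun s : ℝ => NormedSpace.exp (s • A) :=
    NormedSpace.exp_continuous.comp (continuous_id.smul continuous_const)
  have hmul : Continuous fun s : ℝ => NormedSpace.exp (s • A) * B * K :=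
    (hexp.matrix_mul continuous_const).matrix_mul continuous_const
  have hbnd : Continuous fun M : Matrix (Fin n) (Fin n) ℝ => matBnd M := by
    refine continuous_finset_sum _ fun i _ => continuous_finset_sum _ fun j _ => ?_
    exact ((continuous_apply j).comp (continuous_apply i)).abs
  have hφ : Continuous fun s : ℝ => matBnd (NormedSpace.exp (s • A) * B * K) :=
    hbnd.comp hmul
  obtain ⟨x, hx, hmax⟩ := isCompact_Icc.exists_isMaxOn (Set.nonempty_Icc.2 hab)
    hφ.continuousOn
  exact ⟨_, matBnd_nonneg _, fun s hs => hmax hs⟩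

end DecayAux

open DecayAux in
/-- **Exponential decay transfers from the predictor variable to the state.**
Let `A, B, K` be real matrices, `r₀, r₁ ≥ 0`, `τ̄ ≥ 0`, `α > 0`, `M > 0`.  There is a
constant `C > 0` (depending only on `A, B, K, r₀, r₁, τ̄, α, M`) such that for every
measurable `z : ℝ → ℝⁿ` with `z t = 0` for `t < 0` and `|z t| ≤ M exp (-αt) |z 0|` for
`t ≥ 0`, and every measurable `τ : ℝ → [0, τ̄]`, the function
`x t = e^{-A(r₀+r₁)} z t - ∫ θ in (t-r₁)..(t+r₀), e^{A(t-r₁-θ)} B K z (θ - r₀ - τ (θ - r₀)) dθ`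
satisfies `|x t| ≤ C exp (-αt) |z 0|` for all `t ≥ 0`. -/
theorem decay_transfers_to_state
    (n m : ℕ) (A : Matrix (Fin n) (Fin n) ℝ) (B : Matrix (Fin n) (Fin m) ℝ)
    (K : Matrix (Fin m) (Fin n) ℝ) (r₀ r₁ τb α M : ℝ)
    (hr₀ : 0 ≤ r₀) (hr₁ : 0 ≤ r₁) (hτb : 0 ≤ τb) (hα : 0 < α) (hM : 0 < M) :
    ∃ C > (0 : ℝ), ∀ (z : ℝ → Fin n → ℝ) (τ : ℝ → ℝ),
      Measurable z → (∀ t < (0 : ℝ), z t = 0) →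
      (∀ t ≥ (0 : ℝ), euclNorm n (z t) ≤ M * Real.exp (-α * t) * euclNorm n (z 0)) →
      Measurable τ → (∀ θ : ℝ, τ θ ∈ Set.Icc 0 τb) →
      ∀ t ≥ (0 : ℝ),
        euclNorm n
            ((NormedSpace.exp ((-(r₀ + r₁)) • A)).mulVec (z t) -
              ∫ θ in (t - r₁)..(t + r₀),
                (NormedSpace.exp ((t - r₁ - θ) • A) * B * K).mulVec
                  (z (θ - r₀ - τ (θ - r₀)))) ≤
          C * Real.exp (-α * t) * euclNorm n (z 0) := by
  obtain ⟨c, hc0, hc⟩ := exists_expBnd n m A B K (-(r₀ + r₁)) 0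
    (by linarith)
  set P := matBnd (NormedSpace.exp ((-(r₀ + r₁)) • A)) with hP
  have hP0 : 0 ≤ P := matBnd_nonneg _
  set E := Real.exp (α * (r₀ + r₁ + τb)) with hE
  have hE0 : 0 < E := Real.exp_pos _
  have hn0 : (0 : ℝ) ≤ Real.sqrt n := Real.sqrt_nonneg _
  refine ⟨P * M + Real.sqrt n * (c * (M * E)) * (r₀ + r₁) + 1, by positivity,
    fun z τ hz hzneg hzdec hτ hττ t ht => ?_⟩
  set Z0 := euclNorm n (z 0) with hZ0
  have hZ00 : 0 ≤ Z0 := euclNorm_nonneg n _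
  have hexpt : (0 : ℝ) < Real.exp (-α * t) := Real.exp_pos _
  -- bound the first term
  have h1 : euclNorm n ((NormedSpace.exp ((-(r₀ + r₁)) • A)).mulVec (z t)) ≤
      P * M * Real.exp (-α * t) * Z0 := by
    calc euclNorm n ((NormedSpace.exp ((-(r₀ + r₁)) • A)).mulVec (z t)) ≤
        P * euclNorm n (z t) := euclNorm_mulVec_le _ _
      _ ≤ P * (M * Real.exp (-α * t) * Z0) :=
        mul_le_mul_of_nonneg_left (hzdec t ht) hP0
      _ = P * M * Real.exp (-α * t) * Z0 := by ring
  -- bound on z at the shifted times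
  have hzs : ∀ θ ∈ Set.uIoc (t - r₁) (t + r₀),
      euclNorm n (z (θ - r₀ - τ (θ - r₀))) ≤ M * E * Real.exp (-α * t) * Z0 := by
    intro θ hθ
    rw [Set.uIoc_of_le (by linarith)] at hθ
    obtain ⟨hθ1, hθ2⟩ := hθ
    set s := θ - r₀ - τ (θ - r₀) with hs
    obtain ⟨hτ1, hτ2⟩ := hττ (θ - r₀)
    by_cases hs0 : s < 0
    · rw [hzneg s hs0, euclNorm_zero]
      positivity
    · push_neg at hs0
      have hbound := hzdec s hs0
      have hst : -α * s ≤ α * (r₀ + r₁ + τb) + -α * t := by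
        have : t - r₀ - r₁ - τb ≤ s := by
          simp only [hs]; linarith
        nlinarith
      calc euclNorm n (z s) ≤ M * Real.exp (-α * s) * Z0 := hbound
        _ ≤ M * (E * Real.exp (-α * t)) * Z0 := by
            refine mul_le_mul_of_nonneg_right (mul_le_mul_of_nonneg_left ?_ hM.le) hZ00
            rw [hE, ← Real.exp_add]
            exact Real.exp_le_exp.2 hst
        _ = M * E * Real.exp (-α * t) * Z0 := by ring
  -- bound the integrand in the sup norm
  have h2 : euclNorm n (∫ θ in (t - r₁)..(t + r₀),
      (NormedSpace.exp ((t - r₁ - θ) • A) * B * K).mulVec (z (θ - r₀ - τ (θ - r₀)))) ≤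
      Real.sqrt n * (c * (M * E) * Real.exp (-α * t) * Z0) * (r₀ + r₁) := by
    have hInt : ‖∫ θ in (t - r₁)..(t + r₀),
        (NormedSpace.exp ((t - r₁ - θ) • A) * B * K).mulVec
          (z (θ - r₀ - τ (θ - r₀)))‖ ≤
        c * (M * E) * Real.exp (-α * t) * Z0 * |(t + r₀) - (t - r₁)| := by
      refine intervalIntegral.norm_integral_le_of_norm_le_const fun θ hθ => ?_
      have hθ' := hθ
      rw [Set.uIoc_of_le (by linarith)] at hθ'
      obtain ⟨hθ1, hθ2⟩ := hθ'
      have hmem : t - r₁ - θ ∈ Set.Icc (-(r₀ + r₁)) (0 : ℝ) :=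
        ⟨by linarith, by linarith⟩
      calc ‖(NormedSpace.exp ((t - r₁ - θ) • A) * B * K).mulVec
            (z (θ - r₀ - τ (θ - r₀)))‖ ≤
          euclNorm n ((NormedSpace.exp ((t - r₁ - θ) • A) * B * K).mulVec
            (z (θ - r₀ - τ (θ - r₀)))) := pi_norm_le_euclNorm n _
        _ ≤ matBnd (NormedSpace.exp ((t - r₁ - θ) • A) * B * K) *
            euclNorm n (z (θ - r₀ - τ (θ - r₀))) := euclNorm_mulVec_le _ _
        _ ≤ c * (M * E * Real.exp (-α * t) * Z0) := by
            refine mul_le_mul (hc _ hmem) (hzs θ hθ) (euclNorm_nonneg n _) hc0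
        _ = c * (M * E) * Real.exp (-α * t) * Z0 := by ring
    have habs : |(t + r₀) - (t - r₁)| = r₀ + r₁ := by
      rw [abs_of_nonneg (by linarith)]; ring
    calc euclNorm n (∫ θ in (t - r₁)..(t + r₀),
          (NormedSpace.exp ((t - r₁ - θ) • A) * B * K).mulVec
            (z (θ - r₀ - τ (θ - r₀)))) ≤
        Real.sqrt n * ‖∫ θ in (t - r₁)..(t + r₀),
          (NormedSpace.exp ((t - r₁ - θ) • A) * B * K).mulVec
            (z (θ - r₀ - τ (θ - r₀)))‖ := euclNorm_le_sqrt_mul n _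
      _ ≤ Real.sqrt n * (c * (M * E) * Real.exp (-α * t) * Z0 * (r₀ + r₁)) := by
          rw [← habs]
          exact mul_le_mul_of_nonneg_left hInt hn0
      _ = Real.sqrt n * (c * (M * E) * Real.exp (-α * t) * Z0) * (r₀ + r₁) := by ring
  calc euclNorm n ((NormedSpace.exp ((-(r₀ + r₁)) • A)).mulVec (z t) -
        ∫ θ in (t - r₁)..(t + r₀),
          (NormedSpace.exp ((t - r₁ - θ) • A) * B * K).mulVec
            (z (θ - r₀ - τ (θ - r₀)))) ≤
      euclNorm n ((NormedSpace.exp ((-(r₀ + r₁)) • A)).mulVec (z t)) +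
        euclNorm n (∫ θ in (t - r₁)..(t + r₀),
          (NormedSpace.exp ((t - r₁ - θ) • A) * B * K).mulVec
            (z (θ - r₀ - τ (θ - r₀)))) := euclNorm_sub_le n _ _
    _ ≤ P * M * Real.exp (-α * t) * Z0 +
        Real.sqrt n * (c * (M * E) * Real.exp (-α * t) * Z0) * (r₀ + r₁) :=
      add_le_add h1 h2
    _ ≤ (P * M + Real.sqrt n * (c * (M * E)) * (r₀ + r₁) + 1) * Real.exp (-α * t) * Z0 := by
      nlinarith [mul_nonneg hexpt.le hZ00]
end

section
/- Exponentially weighted Jensen–Park inequality. Let R be a symmetric positive semidefinite n×n real matrix and G an n×n real matrix such that the 2n×2n block matrix [[R, G],[Gᵀ, R]] is positive semidefinite. Let α ≥ 0, τ̄ > 0, t ∈ ℝ, τ ∈ [0, τ̄], and let z : [t − τ̄, t] → ℝⁿ be continuously differentiable. Set v₁ = z(t) − z(t − τ) and v₂ = z(t − τ) − z(t − τ̄). Then τ̄ ∫_{t−τ̄}^{t} e^{2α(s−t)} ż(s)ᵀ R ż(s) ds ≥ e^{−2ατ̄} (v₁ᵀR v₁ + 2 v₁ᵀG v₂ + v₂ᵀR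 v₂). -/
open Matrix MeasureTheory

set_option maxHeartbeats 1000000

lemma park_aux {n : ℕ} {R G : Matrix (Fin n) (Fin n) ℝ}
    (hRG : (Matrix.fromBlocks R G Gᵀ R).PosSemidef) (v₁ v₂ : Fin n → ℝ) (a b : ℝ) :
    2 * (a * b) * (v₁ ⬝ᵥ G *ᵥ v₂) ≤ a ^ 2 * (v₁ ⬝ᵥ R *ᵥ v₁) + b ^ 2 * (v₂ ⬝ᵥ R *ᵥ v₂) := by
  have h := hRG.dotProduct_mulVec_nonneg (Sum.elim (a • v₁) (-(b • v₂)))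
  have hGt : v₂ ⬝ᵥ Gᵀ *ᵥ v₁ = v₁ ⬝ᵥ G *ᵥ v₂ := by
    rw [Matrix.dotProduct_mulVec, Matrix.vecMul_transpose, dotProduct_comm,
      Matrix.dotProduct_mulVec]
  simp only [star_trivial, Matrix.fromBlocks_mulVec, Sum.elim_comp_inl, Sum.elim_comp_inr,
    sumElim_dotProduct_sumElim, Matrix.mulVec_smul, Matrix.mulVec_neg,
    dotProduct_add, smul_dotProduct, dotProduct_smul,
    neg_dotProduct, dotProduct_neg, smul_eq_mul, hGt] at h
  nlinarith [h]

lemma quad_nonneg {n : ℕ} {R : Matrix (Fin n) (Fin n) ℝ} (hR : R.PosSemidef) (v : Fin n → ℝ) :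
    0 ≤ v ⬝ᵥ R *ᵥ v := by simpa using hR.dotProduct_mulVec_nonneg v

lemma jensen_quad {n : ℕ} {R : Matrix (Fin n) (Fin n) ℝ} (hR : R.PosSemidef)
    (a b : ℝ) (hab : a ≤ b) (f : ℝ → Fin n → ℝ)
    (hf : ∀ i, ContinuousOn (fun s => f s i) (Set.Icc a b)) :
    (fun i => ∫ s in a..b, f s i) ⬝ᵥ R *ᵥ (fun i => ∫ s in a..b, f s i) ≤
      (b - a) * ∫ s in a..b, f s ⬝ᵥ R *ᵥ f s := by
  have hRt : Rᵀ = R := by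
    have := hR.1; simpa [Matrix.IsHermitian, Matrix.conjTranspose_eq_transpose_of_trivial] using this
  set u : Fin n → ℝ := fun i => ∫ s in a..b, f s i with hu
  have hfi : ∀ i, IntervalIntegrable (fun s => f s i) volume a b := fun i =>
    ContinuousOn.intervalIntegrable (by rw [Set.uIcc_of_le hab]; exact hf i)
  have key : ∀ w : Fin n → ℝ, (∫ s in a..b, (f s ⬝ᵥ w)) = u ⬝ᵥ w := by
    intro w
    have h1 : (∫ s in a..b, (f s ⬝ᵥ w)) = ∫ s in a..b, ∑ i, f s i * w i := by
      simp [dotProduct]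
    rw [h1, intervalIntegral.integral_finset_sum (fun i _ => (hfi i).mul_const (w i))]
    simp [dotProduct, intervalIntegral.integral_mul_const, hu]
  have hdoti : ∀ w : Fin n → ℝ, IntervalIntegrable (fun s => f s ⬝ᵥ w) volume a b := by
    intro w
    apply ContinuousOn.intervalIntegrable
    rw [Set.uIcc_of_le hab]
    simp only [dotProduct]
    exact continuousOn_finset_sum _ fun i _ => (hf i).mul continuousOn_const
  have hqc : ContinuousOn (fun s => f s ⬝ᵥ R *ᵥ f s) (Set.Icc a b) := by
    simp only [dotProduct, Matrix.mulVec]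
    apply continuousOn_finset_sum; intro i _
    exact (hf i).mul (continuousOn_finset_sum _ fun j _ => continuousOn_const.mul (hf j))
  have hqi : IntervalIntegrable (fun s => f s ⬝ᵥ R *ᵥ f s) volume a b :=
    ContinuousOn.intervalIntegrable (by rw [Set.uIcc_of_le hab]; exact hqc)
  rcases eq_or_lt_of_le hab with rfl | hlt
  · have : u = 0 := by funext i; simp [hu]
    rw [this]
    simp
  have hL : 0 < b - a := by linarith
  set c : ℝ := (b - a)⁻¹ with hc
  have hsym : ∀ x w : Fin n → ℝ, w ⬝ᵥ R *ᵥ x = x ⬝ᵥ R *ᵥ w := by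
    intro x w
    rw [Matrix.dotProduct_mulVec, ← hRt, Matrix.vecMul_transpose, hRt, dotProduct_comm]
  have expand : ∀ x : Fin n → ℝ,
      (x - c • u) ⬝ᵥ R *ᵥ (x - c • u)
        = x ⬝ᵥ R *ᵥ x - 2 * (x ⬝ᵥ (R *ᵥ (c • u))) + (c • u) ⬝ᵥ R *ᵥ (c • u) := by
    intro x
    simp only [sub_dotProduct, dotProduct_sub, Matrix.mulVec_sub,
      hsym x (c • u)]
    ring
  have h0 : 0 ≤ ∫ s in a..b, ((f s - c • u) ⬝ᵥ R *ᵥ (f s - c • u)) :=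
    intervalIntegral.integral_nonneg hab (fun s _ => quad_nonneg hR _)
  have h1 : (∫ s in a..b, ((f s - c • u) ⬝ᵥ R *ᵥ (f s - c • u)))
      = (∫ s in a..b, f s ⬝ᵥ R *ᵥ f s) - 2 * (u ⬝ᵥ (R *ᵥ (c • u)))
        + (b - a) * ((c • u) ⬝ᵥ R *ᵥ (c • u)) := by
    simp only [expand]
    rw [intervalIntegral.integral_add (IntervalIntegrable.sub hqi
        (((hdoti (R *ᵥ (c • u))).const_mul 2))) intervalIntegrable_const,
      intervalIntegral.integral_sub hqi ((hdoti (R *ᵥ (c • u))).const_mul 2),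
      intervalIntegral.integral_const_mul, key, intervalIntegral.integral_const,
      smul_eq_mul]
  have e1 : u ⬝ᵥ (R *ᵥ (c • u)) = c * (u ⬝ᵥ R *ᵥ u) := by
    rw [Matrix.mulVec_smul, dotProduct_smul, smul_eq_mul]
  have e2 : (c • u) ⬝ᵥ R *ᵥ (c • u) = c * c * (u ⬝ᵥ R *ᵥ u) := by
    rw [Matrix.mulVec_smul, smul_dotProduct, dotProduct_smul,
      smul_eq_mul, smul_eq_mul]; ring
  rw [h1, e1, e2] at h0
  have e3 : (b - a) * (c * c * (u ⬝ᵥ R *ᵥ u)) = c * (u ⬝ᵥ R *ᵥ u) := by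
    rw [hc]; field_simp
  rw [e3] at h0
  have h2 : c * (u ⬝ᵥ R *ᵥ u) ≤ ∫ s in a..b, f s ⬝ᵥ R *ᵥ f s := by linarith
  calc u ⬝ᵥ R *ᵥ u = (b - a) * (c * (u ⬝ᵥ R *ᵥ u)) := by rw [hc]; field_simp
    _ ≤ (b - a) * ∫ s in a..b, f s ⬝ᵥ R *ᵥ f s := mul_le_mul_of_nonneg_left h2 hL.le

/-- **Exponentially weighted Jensen–Park inequality.**  Let `R` be a symmetric positive
semidefinite `n×n` real matrix and `G` an `n×n` real matrix such that the block matrix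
`[[R, G], [Gᵀ, R]]` is positive semidefinite.  Let `α ≥ 0`, `τ̄ > 0`, `t ∈ ℝ`,
`τ ∈ [0, τ̄]`, and let `z : [t - τ̄, t] → ℝⁿ` be continuously differentiable with derivative
`zd`.  With `v₁ = z t - z (t - τ)` and `v₂ = z (t - τ) - z (t - τ̄)`,
`τ̄ ∫ s in (t-τ̄)..t, exp (2α(s-t)) ⟨zd s, R zd s⟩ ≥ exp (-2ατ̄) (⟨v₁, R v₁⟩ + 2⟨v₁, G v₂⟩ + ⟨v₂, R v₂⟩)`. -/
theorem exp_weighted_jensen_park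
    (n : ℕ) (R G : Matrix (Fin n) (Fin n) ℝ)
    (hR : R.PosSemidef) (hRG : (Matrix.fromBlocks R G Gᵀ R).PosSemidef)
    (α τb t τ : ℝ) (hα : 0 ≤ α) (hτb : 0 < τb) (hτ : τ ∈ Set.Icc 0 τb)
    (z zd : ℝ → Fin n → ℝ)
    (hz : ∀ s ∈ Set.Icc (t - τb) t, HasDerivAt z (zd s) s)
    (hzd : ContinuousOn zd (Set.Icc (t - τb) t)) :
    Real.exp (-(2 * α * τb)) *
        ((z t - z (t - τ)) ⬝ᵥ R.mulVec (z t - z (t - τ)) +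
          2 * ((z t - z (t - τ)) ⬝ᵥ G.mulVec (z (t - τ) - z (t - τb))) +
          (z (t - τ) - z (t - τb)) ⬝ᵥ R.mulVec (z (t - τ) - z (t - τb))) ≤
      τb * ∫ s in (t - τb)..t, Real.exp (2 * α * (s - t)) * (zd s ⬝ᵥ R.mulVec (zd s)) := by
  obtain ⟨hτ0, hττb⟩ := hτ
  have hab1 : t - τb ≤ t - τ := by linarith
  have hab2 : t - τ ≤ t := by linarith
  have hab : t - τb ≤ t := by linarith
  have hzdi : ∀ i, ContinuousOn (fun s => zd s i) (Set.Icc (t - τb) t) :=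
    fun i => (continuous_apply i).comp_continuousOn hzd
  set q : ℝ → ℝ := fun s => zd s ⬝ᵥ R.mulVec (zd s) with hq
  have hqc : ContinuousOn q (Set.Icc (t - τb) t) := by
    simp only [hq, Matrix.mulVec, dotProduct]
    apply continuousOn_finset_sum; intro i _
    exact (hzdi i).mul (continuousOn_finset_sum _ fun j _ => continuousOn_const.mul (hzdi j))
  have hqnn : ∀ s, 0 ≤ q s := fun s => quad_nonneg hR _
  -- Fundamental theorem of calculus, componentwise
  have ftc : ∀ a b : ℝ, t - τb ≤ a → a ≤ b → b ≤ t →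
      (fun i => ∫ s in a..b, zd s i) = z b - z a := by
    intro a b ha hab' hb
    funext i
    have h : (∫ s in a..b, zd s i) = z b i - z a i := by
      apply intervalIntegral.integral_eq_sub_of_hasDerivAt
      · intro s hs
        rw [Set.uIcc_of_le hab'] at hs
        exact (hasDerivAt_pi.mp (hz s ⟨le_trans ha hs.1, le_trans hs.2 hb⟩)) i
      · apply ContinuousOn.intervalIntegrable
        rw [Set.uIcc_of_le hab']
        exact (hzdi i).mono (Set.Icc_subset_Icc ha hb)
    simpa using h
  set v₁ : Fin n → ℝ := z t - z (t - τ) with hv₁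
  set v₂ : Fin n → ℝ := z (t - τ) - z (t - τb) with hv₂
  set p₁ : ℝ := v₁ ⬝ᵥ R.mulVec v₁ with hp₁
  set p₂ : ℝ := v₂ ⬝ᵥ R.mulVec v₂ with hp₂
  set g : ℝ := v₁ ⬝ᵥ G.mulVec v₂ with hg
  set A : ℝ := ∫ s in (t - τ)..t, q s with hA
  set B : ℝ := ∫ s in (t - τb)..(t - τ), q s with hB
  have hJ1 : p₁ ≤ τ * A := by
    have h := jensen_quad hR (t - τ) t hab2 zd
      (fun i => (hzdi i).mono (Set.Icc_subset_Icc hab1 le_rfl))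
    rw [ftc (t - τ) t hab1 hab2 le_rfl, show t - (t - τ) = τ from by ring] at h
    exact h
  have hJ2 : p₂ ≤ (τb - τ) * B := by
    have h := jensen_quad hR (t - τb) (t - τ) hab1 zd
      (fun i => (hzdi i).mono (Set.Icc_subset_Icc le_rfl hab2))
    rw [ftc (t - τb) (t - τ) le_rfl hab1 hab2,
      show t - τ - (t - τb) = τb - τ from by ring] at h
    exact h
  have hA0 : 0 ≤ A := intervalIntegral.integral_nonneg hab2 fun s _ => hqnn s
  have hB0 : 0 ≤ B := intervalIntegral.integral_nonneg hab1 fun s _ => hqnn s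
  have hp10 : 0 ≤ p₁ := quad_nonneg hR _
  have hp20 : 0 ≤ p₂ := quad_nonneg hR _
  have hpark := park_aux hRG v₁ v₂ (τb - τ) τ
  have core : p₁ + 2 * g + p₂ ≤ τb * (B + A) := by
    rcases eq_or_lt_of_le hτ0 with h0 | h0
    · have hv : v₁ = 0 := by rw [hv₁, ← h0]; simp
      have hg0 : g = 0 := by rw [hg, hv, zero_dotProduct]
      have hp10' : p₁ = 0 := by rw [hp₁, hv, zero_dotProduct]
      have : (τb - τ) * B ≤ τb * B := by nlinarith
      nlinarith [hJ2]
    · rcases eq_or_lt_of_le hττb with h1 | h1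
      · have hv : v₂ = 0 := by rw [hv₂, h1]; simp
        have hg0 : g = 0 := by rw [hg, hv, Matrix.mulVec_zero, dotProduct_zero]
        have hp20' : p₂ = 0 := by rw [hp₂, hv, Matrix.mulVec_zero, dotProduct_zero]
        rw [h1] at hJ1
        nlinarith [hJ1]
      · have k1 : ((τb - τ) * τb) * p₁ ≤ ((τb - τ) * τb) * (τ * A) :=
          mul_le_mul_of_nonneg_left hJ1 (mul_nonneg (by linarith) hτb.le)
        have k2 : (τ * τb) * p₂ ≤ (τ * τb) * ((τb - τ) * B) :=
          mul_le_mul_of_nonneg_left hJ2 (mul_nonneg h0.le hτb.le)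
        have hpos : 0 < τ * (τb - τ) := mul_pos h0 (by linarith)
        nlinarith [k1, k2, hpark, hpos]
  -- integrability and splitting
  have hqi1 : IntervalIntegrable q volume (t - τ) t :=
    ContinuousOn.intervalIntegrable
      (by rw [Set.uIcc_of_le hab2]; exact hqc.mono (Set.Icc_subset_Icc hab1 le_rfl))
  have hqi2 : IntervalIntegrable q volume (t - τb) (t - τ) :=
    ContinuousOn.intervalIntegrable
      (by rw [Set.uIcc_of_le hab1]; exact hqc.mono (Set.Icc_subset_Icc le_rfl hab2))
  have hqi : IntervalIntegrable q volume (t - τb) t :=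
    ContinuousOn.intervalIntegrable (by rw [Set.uIcc_of_le hab]; exact hqc)
  have hsplit : B + A = ∫ s in (t - τb)..t, q s :=
    intervalIntegral.integral_add_adjacent_intervals hqi2 hqi1
  -- exponential weight comparison
  have hwi : IntervalIntegrable (fun s => Real.exp (2 * α * (s - t)) * q s) volume (t - τb) t := by
    apply ContinuousOn.intervalIntegrable
    rw [Set.uIcc_of_le hab]
    exact (Continuous.continuousOn (by continuity)).mul hqc
  have hmono : (∫ s in (t - τb)..t, Real.exp (-(2 * α * τb)) * q s) ≤
      ∫ s in (t - τb)..t, Real.exp (2 * α * (s - t)) * q s := by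
    apply intervalIntegral.integral_mono_on hab (hqi.const_mul _) hwi
    intro s hs
    apply mul_le_mul_of_nonneg_right _ (hqnn s)
    apply Real.exp_le_exp.mpr
    nlinarith [hs.1, hs.2, mul_nonneg hα (show (0:ℝ) ≤ s - t + τb by linarith [hs.1])]
  have hrw : (∫ s in (t - τb)..t, Real.exp (-(2 * α * τb)) * q s) =
      Real.exp (-(2 * α * τb)) * ∫ s in (t - τb)..t, q s :=
    intervalIntegral.integral_const_mul _ _
  have hc0 : (0:ℝ) ≤ Real.exp (-(2 * α * τb)) := (Real.exp_pos _).le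
  calc Real.exp (-(2 * α * τb)) * (p₁ + 2 * g + p₂)
      ≤ Real.exp (-(2 * α * τb)) * (τb * (B + A)) := mul_le_mul_of_nonneg_left core hc0
    _ = τb * (Real.exp (-(2 * α * τb)) * (B + A)) := by ring
    _ = τb * (Real.exp (-(2 * α * τb)) * ∫ s in (t - τb)..t, q s) := by rw [hsplit]
    _ = τb * ∫ s in (t - τb)..t, Real.exp (-(2 * α * τb)) * q s := by rw [hrw]
    _ ≤ τb * ∫ s in (t - τb)..t, Real.exp (2 * α * (s - t)) * q s :=
        mul_le_mul_of_nonneg_left hmono hτb.le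
end
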